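/- Let q ∈ (0,1) and consider a test design in which every test contains at least 2 items, with T tests and n items, where items are independently defective with probability p = 1-q. If test t contains x_t ≥ 2 items, then the probability that a fixed item i in test t is disguised in t equals 1 - q^{x_t - 1}, and the probability that item i is totally disguised is at least ∏_{t ∋ i} (1 - q^{x_t - 1}) with equality when the tests containing i are disjoint apart from i. Moreover, (1/n)·Σᵢ ln P[D_i] ≥ (T/n)·min_{x=2,...,n} x·ln(1 - q^{x-1}). -/

import Mathlib

open MeasureTheory ProbabilityTheory

namespace Ald

variable {n : ℕ}

noncomputable def W (q : ℝ) (ω : Fin n → Bool) : ℝ := ∏ j, (if ω j = true then 1 - q else q)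

lemma W_nonneg {q : ℝ} (hq0 : 0 ≤ q) (hq1 : q ≤ 1) (ω : Fin n → Bool) : 0 ≤ W q ω :=
  Finset.prod_nonneg fun j _ => by split_ifs <;> linarith

lemma bool_w (q : ℝ) (x y : Bool) :
    (if x = true then 1 - q else q) * (if y = true then 1 - q else q) =
      (if (x ⊓ y) = true then 1 - q else q) * (if (x ⊔ y) = true then 1 - q else q) := by
  cases x <;> cases y <;>
    simp [min_def, max_def, mul_comm]

lemma W_supermod {q : ℝ} (a b : Fin n → Bool) :
    W q a * W q b = W q (a ⊓ b) * W q (a ⊔ b) := by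
  unfold W
  rw [← Finset.prod_mul_distrib, ← Finset.prod_mul_distrib]
  refine Finset.prod_congr rfl fun j _ => ?_
  simp only [Pi.inf_apply, Pi.sup_apply]
  exact bool_w q (a j) (b j)

variable {q : ℝ} {μ : Measure (Fin n → Bool)} [IsProbabilityMeasure μ]

lemma measAll (A : Set (Fin n → Bool)) : MeasurableSet A := (Set.toFinite A).measurableSet

section
set_option linter.unusedSectionVars false
variable (hq0 : 0 < q) (hq1 : q < 1)
  (hindep : iIndepFun
    (fun (j : Fin n) (ω : Fin n → Bool) => ω j) μ)
  (hmarg : ∀ j : Fin n, μ {ω | ω j = true} = ENNReal.ofReal (1 - q))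

include hq1 hmarg in
lemma marg (j : Fin n) (b : Bool) :
    μ {ω | ω j = b} = ENNReal.ofReal (if b then 1 - q else q) := by
  cases b
  · have hc : {ω : Fin n → Bool | ω j = false} = {ω : Fin n → Bool | ω j = true}ᶜ := by
      ext ω; simp
    rw [hc, prob_compl_eq_one_sub (measAll _), hmarg,
      show (1 : ENNReal) = ENNReal.ofReal 1 by simp,
      ← ENNReal.ofReal_sub _ (by linarith)]
    norm_num
  · simpa using hmarg j

include hq0 hq1 hindep hmarg in
lemma singleton_meas (ω₀ : Fin n → Bool) : μ {ω₀} = ENNReal.ofReal (W q ω₀) := by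
  have h1 : ({ω₀} : Set (Fin n → Bool)) =
      ⋂ j ∈ (Finset.univ : Finset (Fin n)), (fun ω : Fin n → Bool => ω j) ⁻¹' {ω₀ j} := by
    ext ω; simp [funext_iff]
  rw [h1, hindep.measure_inter_preimage_eq_mul Finset.univ
      (fun _ _ => measurableSet_singleton _)]
  rw [W, ENNReal.ofReal_prod_of_nonneg (fun j _ => by split_ifs <;> linarith)]
  refine Finset.prod_congr rfl fun j _ => ?_
  have : (fun ω : Fin n → Bool => ω j) ⁻¹' {ω₀ j} = {ω : Fin n → Bool | ω j = ω₀ j} := rfl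
  rw [this, marg hq1 hmarg j (ω₀ j)]

include hq0 hq1 hindep hmarg in
lemma toReal_meas_ind (A : Set (Fin n → Bool)) :
    (μ A).toReal = ∑ ω : Fin n → Bool, W q ω * A.indicator 1 ω := by
  have h0 : μ A = ∑ ω : Fin n → Bool, μ ({ω} ∩ A) := by
    conv_lhs => rw [show A = ⋃ ω ∈ (Finset.univ : Finset (Fin n → Bool)), ({ω} ∩ A) by
      ext x; simp]
    exact measure_biUnion_finset
      (fun a _ b _ hab => Set.disjoint_left.2 fun x ⟨hx1, _⟩ ⟨hx2, _⟩ => hab (hx1.symm.trans hx2))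
      (fun _ _ => measAll _)
  rw [h0, ENNReal.toReal_sum (fun ω _ => (measure_lt_top μ _).ne)]
  refine Finset.sum_congr rfl fun ω _ => ?_
  by_cases hω : ω ∈ A
  · rw [show ({ω} : Set (Fin n → Bool)) ∩ A = {ω} by
      ext x; simp +contextual [Set.mem_singleton_iff]; rintro rfl; exact hω]
    rw [singleton_meas hq0 hq1 hindep hmarg ω,
      ENNReal.toReal_ofReal (W_nonneg hq0.le hq1.le ω), Set.indicator_of_mem hω]
    simp
  · rw [show ({ω} : Set (Fin n → Bool)) ∩ A = ∅ by
      ext x; simp [Set.mem_singleton_iff]; rintro rfl; exact hω]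
    rw [Set.indicator_of_notMem hω]
    simp

include hq0 hq1 hindep hmarg in
lemma sum_W_one : ∑ ω : Fin n → Bool, W q ω = 1 := by
  have h := toReal_meas_ind hq0 hq1 hindep hmarg (Set.univ)
  rw [measure_univ] at h
  simpa using h.symm

include hq0 hq1 hindep hmarg in
lemma all_false (S : Finset (Fin n)) :
    μ {ω | ∀ j ∈ S, ω j = false} = ENNReal.ofReal (q ^ S.card) := by
  have h1 : {ω : Fin n → Bool | ∀ j ∈ S, ω j = false} =
      ⋂ j ∈ S, (fun ω : Fin n → Bool => ω j) ⁻¹' {false} := by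
    ext ω; simp
  rw [h1, hindep.measure_inter_preimage_eq_mul S (fun _ _ => measurableSet_singleton _)]
  have h2 : ∀ j ∈ S, μ ((fun ω : Fin n → Bool => ω j) ⁻¹' {false})
      = ENNReal.ofReal q := by
    intro j _
    have := marg hq1 hmarg j false
    simpa [Set.preimage] using this
  rw [Finset.prod_congr rfl h2, Finset.prod_const, ← ENNReal.ofReal_pow hq0.le]

include hq0 hq1 hindep hmarg in
lemma exists_true (S : Finset (Fin n)) :
    μ {ω | ∃ j ∈ S, ω j = true} = ENNReal.ofReal (1 - q ^ S.card) := by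
  have hc : {ω : Fin n → Bool | ∃ j ∈ S, ω j = true} =
      {ω : Fin n → Bool | ∀ j ∈ S, ω j = false}ᶜ := by
    ext ω; simp
  have hle : q ^ S.card ≤ 1 := pow_le_one₀ hq0.le hq1.le
  rw [hc, prob_compl_eq_one_sub (measAll _), all_false hq0 hq1 hindep hmarg S,
    show (1 : ENNReal) = ENNReal.ofReal 1 by simp,
    ← ENNReal.ofReal_sub _ (pow_nonneg hq0.le _)]

include hq0 hq1 hindep hmarg in
lemma fkg_events {T : ℕ} (E : Fin T → Set (Fin n → Bool))
    (hup : ∀ t, ∀ ⦃a b : Fin n → Bool⦄, a ≤ b → a ∈ E t → b ∈ E t)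
    (F : Finset (Fin T)) :
    ∏ t ∈ F, (μ (E t)).toReal ≤ (μ (⋂ t ∈ F, E t)).toReal := by
  set f : Fin T → (Fin n → Bool) → ℝ := fun t => (E t).indicator 1 with hf
  have hf0 : ∀ t, ∀ ω, 0 ≤ f t ω := fun t ω => Set.indicator_nonneg (fun _ _ => zero_le_one) ω
  have hf1 : ∀ t, ∀ ω, f t ω ≤ 1 := fun t ω =>
    Set.indicator_le' (fun _ _ => le_refl 1) (fun _ _ => zero_le_one) ω
  have hmono : ∀ t, Monotone (f t) := by
    intro t a b hab
    by_cases ha : a ∈ E t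
    · simp only [hf]; rw [Set.indicator_of_mem ha, Set.indicator_of_mem (hup t hab ha)]; exact le_refl _
    · simp only [hf]; rw [Set.indicator_of_notMem ha]; exact hf0 t b
  have key : ∀ G : Finset (Fin T),
      ∏ t ∈ G, (∑ ω : Fin n → Bool, W q ω * f t ω)
        ≤ ∑ ω : Fin n → Bool, W q ω * ∏ t ∈ G, f t ω := by
    intro G
    induction G using Finset.induction_on with
    | empty => simp [sum_W_one hq0 hq1 hindep hmarg]
    | insert s G' hs IH =>
      have hg0 : ∀ ω, 0 ≤ ∏ t ∈ G', f t ω :=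
        fun ω => Finset.prod_nonneg fun t _ => hf0 t ω
      have hgmono : Monotone (fun ω => ∏ t ∈ G', f t ω) := fun a b hab =>
        Finset.prod_le_prod (fun t _ => hf0 t a) (fun t _ => hmono t hab)
      have hfkg := fkg (f s) (fun ω => ∏ t ∈ G', f t ω) (W q)
        (fun ω => W_nonneg hq0.le hq1.le ω) (fun ω => hf0 s ω) hg0
        (hmono s) hgmono (fun a b => (W_supermod a b).le)
      rw [sum_W_one hq0 hq1 hindep hmarg, one_mul] at hfkg
      calc ∏ t ∈ insert s G', (∑ ω : Fin n → Bool, W q ω * f t ω)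
          = (∑ ω : Fin n → Bool, W q ω * f s ω)
            * ∏ t ∈ G', (∑ ω : Fin n → Bool, W q ω * f t ω) := Finset.prod_insert hs
        _ ≤ (∑ ω : Fin n → Bool, W q ω * f s ω)
            * ∑ ω : Fin n → Bool, W q ω * ∏ t ∈ G', f t ω := by
            refine mul_le_mul_of_nonneg_left IH ?_
            exact Finset.sum_nonneg fun ω _ =>
              mul_nonneg (W_nonneg hq0.le hq1.le ω) (hf0 s ω)
        _ ≤ ∑ ω : Fin n → Bool, W q ω * (f s ω * ∏ t ∈ G', f t ω) := hfkg
        _ = ∑ ω : Fin n → Bool, W q ω * ∏ t ∈ insert s G', f t ω := by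
            refine Finset.sum_congr rfl fun ω _ => ?_
            rw [Finset.prod_insert hs]
  have h1 : ∀ t, (μ (E t)).toReal = ∑ ω : Fin n → Bool, W q ω * f t ω :=
    fun t => toReal_meas_ind hq0 hq1 hindep hmarg (E t)
  have h2 : (μ (⋂ t ∈ F, E t)).toReal
      = ∑ ω : Fin n → Bool, W q ω * ∏ t ∈ F, f t ω := by
    rw [toReal_meas_ind hq0 hq1 hindep hmarg]
    refine Finset.sum_congr rfl fun ω _ => ?_
    congr 1
    by_cases hω : ω ∈ ⋂ t ∈ F, E t
    · rw [Set.indicator_of_mem hω]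
      rw [Set.mem_iInter₂] at hω
      rw [Finset.prod_eq_one fun t ht => ?_]
      · rfl
      · simp only [hf]; rw [Set.indicator_of_mem (hω t ht)]; rfl
    · rw [Set.indicator_of_notMem hω]
      rw [Set.mem_iInter₂] at hω
      push_neg at hω
      obtain ⟨t, ht, htω⟩ := hω
      rw [eq_comm]
      refine Finset.prod_eq_zero ht ?_
      simp only [hf]; rw [Set.indicator_of_notMem htω]
  rw [h2]
  calc ∏ t ∈ F, (μ (E t)).toReal
      = ∏ t ∈ F, ∑ ω : Fin n → Bool, W q ω * f t ω :=
        Finset.prod_congr rfl fun t _ => h1 t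
    _ ≤ _ := key F

include hindep in
lemma indep_blocks {T : ℕ} (A : Fin T → Finset (Fin n)) (F : Finset (Fin T))
    (hdisj : ∀ t ∈ F, ∀ t' ∈ F, t ≠ t' → Disjoint (A t) (A t')) :
    μ {ω | ∀ t ∈ F, ∃ j ∈ A t, ω j = true}
      = ∏ t ∈ F, μ {ω | ∃ j ∈ A t, ω j = true} := by
  classical
  revert hdisj
  induction F using Finset.induction_on with
  | empty => intro _; simp
  | insert s F' hs IH =>
    intro hdisj
    set Ts : Finset (Fin n) := F'.biUnion A with hTs
    have hST : Disjoint (A s) Ts := by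
      rw [hTs, Finset.disjoint_biUnion_right]
      intro t ht
      exact hdisj s (Finset.mem_insert_self s F') t (Finset.mem_insert_of_mem ht)
        (fun h => hs (h ▸ ht))
    have hIF : IndepFun (fun ω (j : { x // x ∈ A s }) => ω j)
        (fun ω (j : Ts) => ω j) μ :=
      hindep.indepFun_finset (A s) Ts hST (fun j => measurable_pi_apply j)
    set B₁ : Set ({ x // x ∈ A s } → Bool) := {v | ∃ j, v j = true} with hB₁
    set B₂ : Set (Ts → Bool) :=
      {v | ∀ t ∈ F', ∃ j : Ts, (j : Fin n) ∈ A t ∧ v j = true} with hB₂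
    have hE1 : (fun ω (j : { x // x ∈ A s }) => ω j) ⁻¹' B₁
        = {ω : Fin n → Bool | ∃ j ∈ A s, ω j = true} := by
      ext ω
      simp only [hB₁, Set.mem_preimage, Set.mem_setOf_eq, Subtype.exists]
      constructor
      · rintro ⟨j, hj, h⟩; exact ⟨j, hj, h⟩
      · rintro ⟨j, hj, h⟩; exact ⟨j, hj, h⟩
    have hE2 : (fun ω (j : Ts) => ω j) ⁻¹' B₂
        = {ω : Fin n → Bool | ∀ t ∈ F', ∃ j ∈ A t, ω j = true} := by
      ext ω
      simp only [hB₂, Set.mem_preimage, Set.mem_setOf_eq, Subtype.exists]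
      constructor
      · intro h t ht
        obtain ⟨j, hjT, hjA, hj⟩ := h t ht
        exact ⟨j, hjA, hj⟩
      · intro h t ht
        obtain ⟨j, hjA, hj⟩ := h t ht
        exact ⟨j, Finset.mem_biUnion.2 ⟨t, ht, hjA⟩, hjA, hj⟩
    have hsplit : {ω : Fin n → Bool | ∀ t ∈ insert s F', ∃ j ∈ A t, ω j = true}
        = ((fun ω (j : { x // x ∈ A s }) => ω j) ⁻¹' B₁)
          ∩ ((fun ω (j : Ts) => ω j) ⁻¹' B₂) := by
      rw [hE1, hE2]
      ext ω
      simp [Finset.forall_mem_insert]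
    rw [hsplit, hIF.measure_inter_preimage_eq_mul B₁ B₂ ((Set.toFinite B₁).measurableSet)
      ((Set.toFinite B₂).measurableSet), hE1, hE2, Finset.prod_insert hs,
      IH (fun t ht t' ht' hne => hdisj t (Finset.mem_insert_of_mem ht)
        t' (Finset.mem_insert_of_mem ht') hne)]

end
end Ald


/-- Aldridge's disguising bound. In a design where every test has ≥ 2 items and items
are independently defective with probability `p = 1 - q`: (i) a fixed item `i` in test
`t` of size `x_t` is disguised in `t` with probability `1 - q^(x_t - 1)`; (ii) the
probability that `i` is totally disguised is at least `∏_{t ∋ i} (1 - q^(x_t - 1))`,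
with equality when the tests containing `i` are disjoint apart from `i`; and (iii)
`(1/n)·Σᵢ ln P[D_i] ≥ (T/n)·min_{x = 2,…,n} x·ln(1 - q^(x-1))`. -/
theorem stmt17 (n T : ℕ) (hn : 2 ≤ n) (q : ℝ) (hq0 : 0 < q) (hq1 : q < 1)
    (tests : Fin T → Finset (Fin n)) (hsize : ∀ t, 2 ≤ (tests t).card)
    (μ : Measure (Fin n → Bool)) [IsProbabilityMeasure μ]
    (hindep : ProbabilityTheory.iIndepFun
      (fun (j : Fin n) (ω : Fin n → Bool) => ω j) μ)
    (hmarg : ∀ j : Fin n, μ {ω | ω j = true} = ENNReal.ofReal (1 - q)) :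
    (∀ (t : Fin T) (i : Fin n), i ∈ tests t →
        μ {ω | ∃ j ∈ tests t, j ≠ i ∧ ω j = true}
          = ENNReal.ofReal (1 - q ^ ((tests t).card - 1))) ∧
    (∀ i : Fin n,
        ∏ t ∈ Finset.univ.filter (fun t : Fin T => i ∈ tests t),
            ENNReal.ofReal (1 - q ^ ((tests t).card - 1))
          ≤ μ {ω | ∀ t : Fin T, i ∈ tests t → ∃ j ∈ tests t, j ≠ i ∧ ω j = true}) ∧
    (∀ i : Fin n,
        (∀ t t' : Fin T, t ≠ t' → i ∈ tests t → i ∈ tests t' →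
            Disjoint (tests t \ {i}) (tests t' \ {i})) →
        ∏ t ∈ Finset.univ.filter (fun t : Fin T => i ∈ tests t),
            ENNReal.ofReal (1 - q ^ ((tests t).card - 1))
          = μ {ω | ∀ t : Fin T, i ∈ tests t → ∃ j ∈ tests t, j ≠ i ∧ ω j = true}) ∧
    ((T : ℝ) / n *
        (Finset.Icc 2 n).inf' (Finset.nonempty_Icc.mpr hn)
          (fun x : ℕ => (x : ℝ) * Real.log (1 - q ^ (x - 1)))
      ≤ (1 / n) * ∑ i : Fin n,
          Real.log
            ((μ {ω | ∀ t : Fin T, i ∈ tests t → ∃ j ∈ tests t, j ≠ i ∧ ω j = true}).toReal)) := by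
  classical
  have hcard : ∀ (t : Fin T) (i : Fin n), i ∈ tests t →
      (tests t \ {i}).card = (tests t).card - 1 := by
    intro t i hi
    rw [Finset.card_sdiff_of_subset (by simpa using hi), Finset.card_singleton]
  have hev : ∀ (t : Fin T) (i : Fin n),
      {ω : Fin n → Bool | ∃ j ∈ tests t, j ≠ i ∧ ω j = true}
        = {ω | ∃ j ∈ tests t \ {i}, ω j = true} := by
    intro t i
    ext ω
    simp only [Set.mem_setOf_eq, Finset.mem_sdiff, Finset.mem_singleton]
    constructor
    · rintro ⟨j, hj, hne, hjt⟩; exact ⟨j, ⟨hj, hne⟩, hjt⟩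
    · rintro ⟨j, ⟨hj, hne⟩, hjt⟩; exact ⟨j, hj, hne, hjt⟩
  have parti : ∀ (t : Fin T) (i : Fin n), i ∈ tests t →
      μ {ω | ∃ j ∈ tests t, j ≠ i ∧ ω j = true}
        = ENNReal.ofReal (1 - q ^ ((tests t).card - 1)) := by
    intro t i hi
    rw [hev t i, Ald.exists_true hq0 hq1 hindep hmarg, hcard t i hi]
  -- the totally disguised event as an intersection
  have hD : ∀ i : Fin n,
      {ω : Fin n → Bool | ∀ t : Fin T, i ∈ tests t → ∃ j ∈ tests t, j ≠ i ∧ ω j = true}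
        = ⋂ t ∈ Finset.univ.filter (fun t : Fin T => i ∈ tests t),
            {ω : Fin n → Bool | ∃ j ∈ tests t, j ≠ i ∧ ω j = true} := by
    intro i
    ext ω
    simp [Set.mem_iInter₂]
  have hup : ∀ i : Fin n, ∀ t : Fin T, ∀ ⦃a b : Fin n → Bool⦄, a ≤ b →
      a ∈ {ω : Fin n → Bool | ∃ j ∈ tests t, j ≠ i ∧ ω j = true} →
      b ∈ {ω : Fin n → Bool | ∃ j ∈ tests t, j ≠ i ∧ ω j = true} := by
    rintro i t a b hab ⟨j, hj, hne, hjt⟩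
    exact ⟨j, hj, hne, le_antisymm (Bool.le_true _) (hjt ▸ hab j)⟩
  have partii : ∀ i : Fin n,
      ∏ t ∈ Finset.univ.filter (fun t : Fin T => i ∈ tests t),
          ENNReal.ofReal (1 - q ^ ((tests t).card - 1))
        ≤ μ {ω | ∀ t : Fin T, i ∈ tests t → ∃ j ∈ tests t, j ≠ i ∧ ω j = true} := by
    intro i
    set F := Finset.univ.filter (fun t : Fin T => i ∈ tests t) with hF
    have hprodeq : ∏ t ∈ F, ENNReal.ofReal (1 - q ^ ((tests t).card - 1))
        = ∏ t ∈ F, μ {ω : Fin n → Bool | ∃ j ∈ tests t, j ≠ i ∧ ω j = true} := by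
      refine Finset.prod_congr rfl fun t ht => ?_
      rw [parti t i (Finset.mem_filter.1 ht).2]
    rw [hprodeq, hD i]
    have hfkg := Ald.fkg_events hq0 hq1 hindep hmarg
      (fun t => {ω : Fin n → Bool | ∃ j ∈ tests t, j ≠ i ∧ ω j = true}) (hup i) F
    refine (ENNReal.toReal_le_toReal ?_ ?_).1 ?_
    · exact (ENNReal.prod_lt_top (fun t _ => measure_lt_top μ _)).ne
    · exact (measure_lt_top μ _).ne
    · rw [ENNReal.toReal_prod]
      exact hfkg
  refine ⟨parti, partii, ?_, ?_⟩
  · -- part iii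
    intro i hdisj
    set F := Finset.univ.filter (fun t : Fin T => i ∈ tests t) with hF
    have hDev : {ω : Fin n → Bool | ∀ t : Fin T, i ∈ tests t →
        ∃ j ∈ tests t, j ≠ i ∧ ω j = true}
        = {ω | ∀ t ∈ F, ∃ j ∈ tests t \ {i}, ω j = true} := by
      ext ω
      simp only [Set.mem_setOf_eq, hF, Finset.mem_filter, Finset.mem_univ, true_and,
        Finset.mem_sdiff, Finset.mem_singleton]
      constructor
      · intro h t ht
        obtain ⟨j, hj, hne, hjt⟩ := h t ht
        exact ⟨j, ⟨hj, hne⟩, hjt⟩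
      · intro h t ht
        obtain ⟨j, ⟨hj, hne⟩, hjt⟩ := h t ht
        exact ⟨j, hj, hne, hjt⟩
    rw [hDev, Ald.indep_blocks hindep (fun t => tests t \ {i}) F ?_]
    · refine Finset.prod_congr rfl fun t ht => ?_
      rw [Ald.exists_true hq0 hq1 hindep hmarg, hcard t i (Finset.mem_filter.1 ht).2]
    · intro t ht t' ht' hne
      exact hdisj t t' hne (Finset.mem_filter.1 ht).2 (Finset.mem_filter.1 ht').2
  · -- part iv
    set c : Fin T → ℝ := fun t => Real.log (1 - q ^ ((tests t).card - 1)) with hc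
    have hqpow : ∀ t : Fin T, q ^ ((tests t).card - 1) < 1 := by
      intro t
      refine pow_lt_one₀ hq0.le hq1 ?_
      have := hsize t
      omega
    have hpos : ∀ t : Fin T, (0:ℝ) < 1 - q ^ ((tests t).card - 1) :=
      fun t => by linarith [hqpow t]
    set m : ℝ := (Finset.Icc 2 n).inf' (Finset.nonempty_Icc.mpr hn)
      (fun x : ℕ => (x : ℝ) * Real.log (1 - q ^ (x - 1))) with hm
    -- step 1 : per-item log bound
    have hstep1 : ∀ i : Fin n,
        ∑ t ∈ Finset.univ.filter (fun t : Fin T => i ∈ tests t), c t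
          ≤ Real.log ((μ {ω | ∀ t : Fin T, i ∈ tests t →
              ∃ j ∈ tests t, j ≠ i ∧ ω j = true}).toReal) := by
      intro i
      set F := Finset.univ.filter (fun t : Fin T => i ∈ tests t) with hF
      have hprodpos : (0:ℝ) < ∏ t ∈ F, (1 - q ^ ((tests t).card - 1)) :=
        Finset.prod_pos fun t _ => hpos t
      have hle : ∏ t ∈ F, (1 - q ^ ((tests t).card - 1))
          ≤ (μ {ω | ∀ t : Fin T, i ∈ tests t →
              ∃ j ∈ tests t, j ≠ i ∧ ω j = true}).toReal := by
        have h2 := ENNReal.toReal_mono (measure_lt_top μ _).ne (partii i)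
        rwa [ENNReal.toReal_prod,
          Finset.prod_congr rfl (fun t (ht : t ∈ F) =>
            ENNReal.toReal_ofReal (le_of_lt (hpos t)))] at h2
      calc ∑ t ∈ F, c t
          = Real.log (∏ t ∈ F, (1 - q ^ ((tests t).card - 1))) := by
            rw [Real.log_prod (fun t _ => (hpos t).ne')]
        _ ≤ _ := Real.log_le_log hprodpos hle
    -- step 2 : double counting
    have hstep2 : ∑ i : Fin n, ∑ t ∈ Finset.univ.filter (fun t : Fin T => i ∈ tests t), c t
        = ∑ t : Fin T, ((tests t).card : ℝ) * c t := by
      have h1 : ∀ i : Fin n,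
          ∑ t ∈ Finset.univ.filter (fun t : Fin T => i ∈ tests t), c t
            = ∑ t : Fin T, (if i ∈ tests t then c t else 0) := by
        intro i; rw [Finset.sum_filter]
      rw [Finset.sum_congr rfl fun i _ => h1 i, Finset.sum_comm]
      refine Finset.sum_congr rfl fun t _ => ?_
      rw [Finset.sum_ite_mem, Finset.univ_inter, Finset.sum_const, nsmul_eq_mul]
    -- step 3 : each term at least m
    have hstep3 : ∀ t : Fin T, m ≤ ((tests t).card : ℝ) * c t := by
      intro t
      have hmem : (tests t).card ∈ Finset.Icc 2 n := by
        refine Finset.mem_Icc.2 ⟨hsize t, ?_⟩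
        simpa using Finset.card_le_univ (tests t)
      exact Finset.inf'_le _ hmem
    have hchain : (T : ℝ) * m ≤ ∑ i : Fin n,
        Real.log ((μ {ω | ∀ t : Fin T, i ∈ tests t →
          ∃ j ∈ tests t, j ≠ i ∧ ω j = true}).toReal) := by
      calc (T : ℝ) * m = ∑ _t : Fin T, m := by
            rw [Finset.sum_const, Finset.card_univ, Fintype.card_fin, nsmul_eq_mul]
        _ ≤ ∑ t : Fin T, ((tests t).card : ℝ) * c t :=
            Finset.sum_le_sum fun t _ => hstep3 t
        _ = ∑ i : Fin n, ∑ t ∈ Finset.univ.filter (fun t : Fin T => i ∈ tests t), c t :=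
            hstep2.symm
        _ ≤ _ := Finset.sum_le_sum fun i _ => hstep1 i
    have hn0 : (0:ℝ) < n := by exact_mod_cast Nat.lt_of_lt_of_le Nat.zero_lt_two hn
    calc (T : ℝ) / n * m = (1 / n) * ((T : ℝ) * m) := by ring
      _ ≤ (1 / n) * ∑ i : Fin n,
          Real.log ((μ {ω | ∀ t : Fin T, i ∈ tests t →
            ∃ j ∈ tests t, j ≠ i ∧ ω j = true}).toReal) := by
          refine mul_le_mul_of_nonneg_left hchain ?_
          positivity
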